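/- Let 0 < α < 1, L ∈ C²([a,b] × ℝ²), and suppose y ∈ C¹([a,b]) satisfies, for some constant K and all x ∈ [a,b), the integral Euler–Lagrange equation (xJ^α_b ∂L/∂y)(x) + (∂L/∂(ᶜaD^α y))(x) = K (b-x)^{α-1}, where the left-hand side extends continuously to x = b. Then K = 0 and (∂L/∂(ᶜaD^α y)) evaluated at x = b equals 0. -/
import Mathlib


open MeasureTheory intervalIntegral Real Set

/-- The left Caputo fractional derivative of order `α ∈ (0,1)`. -/
noncomputable def leftCaputo (α a : ℝ) (y : ℝ → ℝ) (x : ℝ) : ℝ :=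
  (1 / Real.Gamma (1 - α)) * ∫ u in a..x, deriv y u * (x - u) ^ (-α)

/-- The right Riemann–Liouville fractional integral of order `α` with base point `b`. -/
noncomputable def rightRL (α b : ℝ) (g : ℝ → ℝ) (x : ℝ) : ℝ :=
  (1 / Real.Gamma α) * ∫ u in x..b, g u * (u - x) ^ (α - 1)

/-- If the left-hand side of the integral Euler–Lagrange equation extends
continuously to `x = b`, then the constant `K` vanishes and the natural boundary
condition `∂L/∂(ᶜaD^α y)|_{x=b} = 0` holds. -/
theorem eulerLagrange_natural_boundary
    (α a b : ℝ) (hα₀ : 0 < α) (hα₁ : α < 1) (hab : a < b)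
    (L : ℝ → ℝ → ℝ → ℝ)
    (hL : ContDiffOn ℝ 2 (fun p : ℝ × ℝ × ℝ => L p.1 p.2.1 p.2.2)
      (Set.Icc a b ×ˢ (Set.univ : Set (ℝ × ℝ))))
    (y : ℝ → ℝ) (hy : ContDiffOn ℝ 1 y (Set.Icc a b))
    (K : ℝ) (G : ℝ → ℝ)
    (hG : ∀ x ∈ Set.Ico a b,
      G x = rightRL α b (fun u => deriv (fun v => L u v (leftCaputo α a y u)) (y u)) x
        + deriv (fun w => L x (y x) w) (leftCaputo α a y x))
    (hGb : G b = deriv (fun w => L b (y b) w) (leftCaputo α a y b))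
    (hGcont : ContinuousOn G (Set.Icc a b))
    (hEL : ∀ x ∈ Set.Ico a b, G x = K * (b - x) ^ (α - 1)) :
    K = 0 ∧ deriv (fun w => L b (y b) w) (leftCaputo α a y b) = 0 := by
  have hbmem : b ∈ closure (Set.Ico a b) := by
    rw [closure_Ico hab.ne]; exact Set.right_mem_Icc.2 hab.le
  have hne : (nhdsWithin b (Set.Ico a b)).NeBot :=
    mem_closure_iff_nhdsWithin_neBot.mp hbmem
  have hle : nhdsWithin b (Set.Ico a b) ≤ nhdsWithin b (Set.Icc a b) :=
    nhdsWithin_mono b Set.Ico_subset_Icc_self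
  have hGt : Filter.Tendsto G (nhdsWithin b (Set.Ico a b)) (nhds (G b)) :=
    (hGcont.continuousWithinAt (Set.right_mem_Icc.2 hab.le)).mono_left hle
  have hsub : Filter.Tendsto (fun x => b - x) (nhdsWithin b (Set.Ico a b)) (nhds 0) := by
    have : Filter.Tendsto (fun x => b - x) (nhds b) (nhds (b - b)) :=
      (continuous_const.sub continuous_id).tendsto b
    rw [sub_self] at this
    exact this.mono_left nhdsWithin_le_nhds
  have hpow : Filter.Tendsto (fun x => (b - x) ^ (1 - α))
      (nhdsWithin b (Set.Ico a b)) (nhds 0) := by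
    have hc : ContinuousAt (fun t : ℝ => t ^ (1 - α)) 0 :=
      Real.continuousAt_rpow_const 0 (1 - α) (Or.inr (by linarith))
    have := hc.tendsto.comp hsub
    rwa [Real.zero_rpow (by linarith : (1 : ℝ) - α ≠ 0)] at this
  have hKev : ∀ᶠ x in nhdsWithin b (Set.Ico a b), G x * (b - x) ^ (1 - α) = K := by
    filter_upwards [self_mem_nhdsWithin] with x hx
    have hbx : 0 < b - x := sub_pos.2 hx.2
    rw [hEL x hx, mul_assoc, ← Real.rpow_add hbx]
    norm_num
  have hKt : Filter.Tendsto (fun x => G x * (b - x) ^ (1 - α))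
      (nhdsWithin b (Set.Ico a b)) (nhds (G b * 0)) := hGt.mul hpow
  have hK0 : K = 0 := by
    have := tendsto_nhds_unique (hKt.congr' hKev) tendsto_const_nhds
    rw [mul_zero] at this; exact this.symm
  have hGb0 : G b = 0 := by
    have hG0 : ∀ᶠ x in nhdsWithin b (Set.Ico a b), G x = 0 := by
      filter_upwards [self_mem_nhdsWithin] with x hx
      rw [hEL x hx, hK0, zero_mul]
    exact tendsto_nhds_unique (hGt.congr' hG0) tendsto_const_nhds
  exact ⟨hK0, by rw [← hGb, hGb0]⟩
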